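/- For every v ∈ (0,1] there exists a measurable m : Ω → [0,1] with ‖m‖₁ = v such that the set of volumes maximizing d_m equals [v², 1]; in particular the lower bound ‖m‖₁² on Dice-optimal volume is sharp and the upper bound 1 is attained. One such example has quantile function F_m⁻¹(u) = (1-v)/(1-v²) · 1{u > v²}. -/

import Mathlib

open MeasureTheory Set

noncomputable section

/-- Normalized Lebesgue measure on the unit cube `[0,1]^n`. -/
def cubeMeasure (n : ℕ) : Measure (Fin n → ℝ) :=
  volume.restrict (Set.univ.pi fun _ => Set.Icc (0:ℝ) 1)

/-- A segmentation: a measurable `{0,1}`-valued function on the cube. -/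
def IsSeg {n : ℕ} (s : (Fin n → ℝ) → ℝ) : Prop :=
  Measurable s ∧ ∀ ω, s ω = 0 ∨ s ω = 1

/-- A marginal function: a measurable `[0,1]`-valued function on the cube. -/
def IsMarg {n : ℕ} (m : (Fin n → ℝ) → ℝ) : Prop :=
  Measurable m ∧ ∀ ω, m ω ∈ Set.Icc (0:ℝ) 1

/-- The volume `‖f‖₁ = ∫ f dλ` (for nonnegative `f`). -/
def vol {n : ℕ} (f : (Fin n → ℝ) → ℝ) : ℝ := ∫ ω, f ω ∂(cubeMeasure n)

/-- `F_m(t) = λ({ω : 1 - m(ω) ≤ t})`. -/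
def Fcdf {n : ℕ} (m : (Fin n → ℝ) → ℝ) (t : ℝ) : ℝ :=
  ((cubeMeasure n) {ω | 1 - m ω ≤ t}).toReal

/-- The left limit `F_m(t-) = λ({ω : 1 - m(ω) < t})`. -/
def FcdfMinus {n : ℕ} (m : (Fin n → ℝ) → ℝ) (t : ℝ) : ℝ :=
  ((cubeMeasure n) {ω | 1 - m ω < t}).toReal

/-- The generalized inverse (quantile function) `F_m⁻¹(v) = inf{t ∈ [0,1] : F_m(t) ≥ v}`. -/
def Finv {n : ℕ} (m : (Fin n → ℝ) → ℝ) (v : ℝ) : ℝ :=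
  sInf {t | t ∈ Set.Icc (0:ℝ) 1 ∧ v ≤ Fcdf m t}

/-- The function `d_m`. -/
def dFun {n : ℕ} (m : (Fin n → ℝ) → ℝ) (v : ℝ) : ℝ :=
  2 * (∫ u in (0:ℝ)..v, (1 - Finv m u)) / (vol m + v)

/-- Auxiliary: the cube has measure one. -/
lemma cube_univ (n : ℕ) : cubeMeasure n Set.univ = 1 := by
  rw [cubeMeasure, Measure.restrict_apply MeasurableSet.univ, Set.univ_inter,
    volume_pi_pi]
  simp [Real.volume_Icc]

instance (n : ℕ) : IsProbabilityMeasure (cubeMeasure n) := ⟨cube_univ n⟩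

/-- Auxiliary: the measure of a lower slab. -/
lemma cube_lt (n : ℕ) (i0 : Fin n) (a : ℝ) (ha0 : 0 ≤ a) (ha1 : a ≤ 1) :
    cubeMeasure n {ω | ω i0 < a} = ENNReal.ofReal a := by
  have hms : MeasurableSet {ω : Fin n → ℝ | ω i0 < a} :=
    measurableSet_lt (measurable_pi_apply i0) measurable_const
  rw [cubeMeasure, Measure.restrict_apply hms]
  have hset : {ω : Fin n → ℝ | ω i0 < a} ∩ (Set.univ.pi fun _ => Set.Icc (0:ℝ) 1)
      = Set.univ.pi (fun j => if j = i0 then Set.Ico 0 a else Set.Icc (0:ℝ) 1) := by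
    ext ω
    simp only [Set.mem_inter_iff, Set.mem_setOf_eq, Set.mem_pi, Set.mem_univ,
      forall_true_left]
    constructor
    · rintro ⟨h1, h2⟩ j
      by_cases hj : j = i0
      · subst hj; simp only [if_pos rfl, Set.mem_Ico]; exact ⟨(h2 j).1, h1⟩
      · simpa [hj] using h2 j
    · intro h
      have hi := h i0
      simp only [if_pos rfl, Set.mem_Ico] at hi
      refine ⟨hi.2, fun j => ?_⟩
      by_cases hj : j = i0
      · subst hj; exact ⟨hi.1, le_trans hi.2.le ha1⟩
      · simpa [hj] using h j
  rw [hset, volume_pi_pi]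
  have : ∀ j : Fin n, volume (if j = i0 then Set.Ico 0 a else Set.Icc (0:ℝ) 1)
      = if j = i0 then ENNReal.ofReal a else 1 := by
    intro j
    by_cases hj : j = i0 <;> simp [hj, Real.volume_Ico, Real.volume_Icc]
  simp_rw [this]
  rw [Finset.prod_ite_eq' Finset.univ i0 (fun _ => ENNReal.ofReal a)]
  simp

theorem stmt10 {n : ℕ} (hn : 1 ≤ n) :
    ∀ v ∈ Set.Ioc (0:ℝ) 1, ∃ m : (Fin n → ℝ) → ℝ,
      IsMarg m ∧ vol m = v ∧
      {w ∈ Set.Icc (0:ℝ) 1 | ∀ u ∈ Set.Icc (0:ℝ) 1, dFun m u ≤ dFun m w} =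
        Set.Icc (v ^ 2) 1 := by
  rintro v ⟨hv0, hv1⟩
  set i0 : Fin n := ⟨0, hn⟩ with hi0
  have hv2_0 : (0:ℝ) < v ^ 2 := by positivity
  have hv2_1 : v ^ 2 ≤ 1 := by nlinarith
  have h1v : (0:ℝ) < 1 + v := by linarith
  set b : ℝ := v / (1 + v) with hbdef
  set c : ℝ := 1 / (1 + v) with hcdef
  have hb0 : 0 ≤ b := by positivity
  have hbc : 1 - b = c := by rw [hbdef, hcdef]; field_simp; ring
  have hc0 : 0 < c := by positivity
  have hc1 : c ≤ 1 := by rw [hcdef, div_le_one h1v]; linarith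
  have hb1 : b ≤ 1 := by linarith
  set A : Set (Fin n → ℝ) := {ω | ω i0 < v ^ 2} with hAdef
  have hAmeas : MeasurableSet A :=
    measurableSet_lt (measurable_pi_apply i0) measurable_const
  have hA : cubeMeasure n A = ENNReal.ofReal (v ^ 2) :=
    cube_lt n i0 (v ^ 2) hv2_0.le hv2_1
  set m : (Fin n → ℝ) → ℝ := fun ω => if ω i0 < v ^ 2 then 1 else b with hmdef
  have hm_meas : Measurable m :=
    Measurable.ite (measurableSet_lt (measurable_pi_apply i0) measurable_const)
      measurable_const measurable_const
  have hvol : vol m = v := by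
    have hm_eq : m = fun ω => Set.indicator A (fun _ => 1 - b) ω + b := by
      funext ω
      by_cases h : ω i0 < v ^ 2
      · simp [hmdef, h, Set.indicator_apply, hAdef, Set.mem_setOf_eq]
      · simp [hmdef, h, Set.indicator_apply, hAdef, Set.mem_setOf_eq]
    rw [vol, hm_eq]
    rw [integral_add ((integrable_const (1 - b)).indicator hAmeas) (integrable_const b)]
    rw [integral_indicator hAmeas, setIntegral_const, integral_const, measureReal_def, hA,
      ENNReal.toReal_ofReal hv2_0.le, measureReal_def, measure_univ, ENNReal.toReal_one]
    rw [smul_eq_mul, smul_eq_mul, one_mul, hbdef]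
    field_simp
    ring
  refine ⟨m, ⟨hm_meas, fun ω => ?_⟩, hvol, ?_⟩
  · by_cases h : ω i0 < v ^ 2 <;> simp [hmdef, h, hb0, hb1]
  -- the main set equality
  · -- value of `1 - m`
    have h1m : ∀ ω, 1 - m ω = if ω i0 < v ^ 2 then 0 else c := by
      intro ω
      by_cases h : ω i0 < v ^ 2 <;> simp [hmdef, h, hbc]
    -- cdf values
    have hFcdf_mid : ∀ t, 0 ≤ t → t < c → Fcdf m t = v ^ 2 := by
      intro t ht0 htc
      have hset : {ω : Fin n → ℝ | 1 - m ω ≤ t} = A := by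
        ext ω
        simp only [Set.mem_setOf_eq, h1m ω, hAdef]
        by_cases h : ω i0 < v ^ 2 <;> simp [h, ht0, not_le.2 htc]
      rw [Fcdf, hset, hA, ENNReal.toReal_ofReal hv2_0.le]
    have hFcdf_hi : ∀ t, c ≤ t → Fcdf m t = 1 := by
      intro t htc
      have hset : {ω : Fin n → ℝ | 1 - m ω ≤ t} = Set.univ := by
        ext ω
        simp only [Set.mem_setOf_eq, h1m ω, Set.mem_univ, iff_true]
        by_cases h : ω i0 < v ^ 2
        · simpa [h] using le_trans hc0.le htc
        · simpa [h] using htc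
      rw [Fcdf, hset, cube_univ, ENNReal.toReal_one]
    -- quantile values
    have hFinv_lo : ∀ u : ℝ, u ≤ v ^ 2 → Finv m u = 0 := by
      intro u hu
      have hmem : (0:ℝ) ∈ {t | t ∈ Set.Icc (0:ℝ) 1 ∧ u ≤ Fcdf m t} := by
        refine ⟨⟨le_refl 0, zero_le_one⟩, ?_⟩
        rw [hFcdf_mid 0 le_rfl hc0]; exact hu
      have hlb : ∀ t ∈ {t | t ∈ Set.Icc (0:ℝ) 1 ∧ u ≤ Fcdf m t}, (0:ℝ) ≤ t :=
        fun t ht => ht.1.1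
      exact le_antisymm (csInf_le ⟨0, hlb⟩ hmem) (le_csInf ⟨0, hmem⟩ hlb)
    have hFinv_hi : ∀ u : ℝ, v ^ 2 < u → u ≤ 1 → Finv m u = c := by
      intro u hu hu1
      have hmem : c ∈ {t | t ∈ Set.Icc (0:ℝ) 1 ∧ u ≤ Fcdf m t} := by
        refine ⟨⟨hc0.le, hc1⟩, ?_⟩
        rw [hFcdf_hi c le_rfl]; exact hu1
      have hlb : ∀ t ∈ {t | t ∈ Set.Icc (0:ℝ) 1 ∧ u ≤ Fcdf m t}, c ≤ t := by
        rintro t ⟨⟨ht0, _⟩, hut⟩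
        by_contra hlt
        push_neg at hlt
        rw [hFcdf_mid t ht0 hlt] at hut
        linarith
      exact le_antisymm (csInf_le ⟨c, hlb⟩ hmem) (le_csInf ⟨c, hmem⟩ hlb)
    -- integrability
    have hII1 : IntervalIntegrable (fun u => 1 - Finv m u) volume 0 (v ^ 2) := by
      refine (intervalIntegrable_const (c := (1:ℝ))).congr ?_
      intro u hu
      rw [Set.uIoc_of_le hv2_0.le] at hu
      show (1:ℝ) = 1 - Finv m u
      rw [hFinv_lo u hu.2]; ring
    have hII2 : ∀ w, v ^ 2 ≤ w → w ≤ 1 →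
        IntervalIntegrable (fun u => 1 - Finv m u) volume (v ^ 2) w := by
      intro w hw hw1
      refine (intervalIntegrable_const (c := b)).congr ?_
      intro u hu
      rw [Set.uIoc_of_le hw] at hu
      show b = 1 - Finv m u
      rw [hFinv_hi u hu.1 (le_trans hu.2 hw1)]
      linarith
    -- integral values
    have hI1 : ∀ w, 0 ≤ w → w ≤ v ^ 2 →
        (∫ u in (0:ℝ)..w, (1 - Finv m u)) = w := by
      intro w h0 h1
      rw [intervalIntegral.integral_congr (g := fun _ => (1:ℝ)) ?_,
        intervalIntegral.integral_const, smul_eq_mul]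
      · ring
      · intro u hu
        rw [Set.uIcc_of_le h0] at hu
        show 1 - Finv m u = 1
        rw [hFinv_lo u (le_trans hu.2 h1)]; ring
    have hI2 : ∀ w, v ^ 2 ≤ w → w ≤ 1 →
        (∫ u in (0:ℝ)..w, (1 - Finv m u)) = v ^ 2 + b * (w - v ^ 2) := by
      intro w hw hw1
      rw [← intervalIntegral.integral_add_adjacent_intervals hII1 (hII2 w hw hw1)]
      have h2 : (∫ u in (v ^ 2)..w, (1 - Finv m u)) = b * (w - v ^ 2) := by
        rw [intervalIntegral.integral_of_le hw,
          setIntegral_congr_fun measurableSet_Ioc (g := fun _ => b)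
            (fun u hu => by
              show 1 - Finv m u = b
              rw [hFinv_hi u hu.1 (le_trans hu.2 hw1)]; linarith),
          setIntegral_const, Real.volume_real_Ioc_of_le hw,
          smul_eq_mul]
        ring
      rw [hI1 (v ^ 2) hv2_0.le le_rfl, h2]
    -- dFun values
    have hdlo : ∀ w, 0 ≤ w → w ≤ v ^ 2 → dFun m w = 2 * w / (v + w) := by
      intro w h0 h1
      rw [dFun, hI1 w h0 h1, hvol]
    have hdhi : ∀ w, v ^ 2 ≤ w → w ≤ 1 → dFun m w = 2 * v / (1 + v) := by
      intro w hw hw1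
      have hvw : 0 < v + w := by nlinarith
      rw [dFun, hI2 w hw hw1, hvol, hbdef]
      rw [div_eq_div_iff hvw.ne' h1v.ne']
      field_simp
      ring
    -- the set equality
    ext w
    simp only [Set.mem_setOf_eq, Set.mem_Icc]
    constructor
    · rintro ⟨⟨hw0, hw1⟩, hmax⟩
      refine ⟨?_, hw1⟩
      by_contra hlt
      push_neg at hlt
      have h1 := hmax (v ^ 2) ⟨hv2_0.le, hv2_1⟩
      rw [hdhi (v ^ 2) le_rfl hv2_1, hdlo w hw0 hlt.le] at h1
      have hvw : 0 < v + w := by linarith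
      rw [div_le_div_iff₀ h1v hvw] at h1
      nlinarith
    · rintro ⟨hw2, hw1⟩
      have hw0 : 0 ≤ w := le_trans hv2_0.le hw2
      refine ⟨⟨hw0, hw1⟩, fun u hu => ?_⟩
      obtain ⟨hu0, hu1⟩ := hu
      rw [hdhi w hw2 hw1]
      by_cases hule : u ≤ v ^ 2
      · rw [hdlo u hu0 hule]
        have huv : 0 < v + u := by linarith
        rw [div_le_div_iff₀ huv h1v]
        nlinarith
      · push_neg at hule
        rw [hdhi u hule.le hu1]
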